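/- If a class 𝒞 of Baire spaces is closed under open subspaces and dense Baire subspaces, then every 𝒞-Piotrowski regular topological space X is strong 𝒞-Piotrowski (and hence a regular space is 𝒞-Piotrowski if and only if it is strong 𝒞-Piotrowski). -/

import Mathlib

open Topology Set

universe u v

/-- `f` is quasicontinuous at `x`. -/
def QuasiContinuousAt {X : Type*} {Y : Type*} [TopologicalSpace X] [TopologicalSpace Y]
    (f : X → Y) (x : X) : Prop :=
  ∀ Ox ∈ nhds x, ∀ Oy ∈ nhds (f x),
    ∃ U : Set X, IsOpen U ∧ U.Nonempty ∧ U ⊆ Ox ∧ f '' U ⊆ Oy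

/-- `f` is quasicontinuous. -/
def QuasiContinuous {X Y : Type*} [TopologicalSpace X] [TopologicalSpace Y] (f : X → Y) : Prop :=
  ∀ x, QuasiContinuousAt f x

/-- The set of continuity points of a map. -/
def ContinuityPoints {Z X : Type*} [TopologicalSpace Z] [TopologicalSpace X] (f : Z → X) :
    Set Z :=
  {z | ContinuousAt f z}

/-- A multivalued map (represented as `Φ : Z → Set X`) is usco if it has nonempty compact
values and is upper semicontinuous. -/
def IsUsco {Z X : Type*} [TopologicalSpace Z] [TopologicalSpace X] (Φ : Z → Set X) : Prop :=
  (∀ z, (Φ z).Nonempty) ∧ (∀ z, IsCompact (Φ z)) ∧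
    ∀ U : Set X, IsOpen U → IsOpen {z | Φ z ⊆ U}

/-- A minimal usco map. -/
def IsMinimalUsco {Z X : Type*} [TopologicalSpace Z] [TopologicalSpace X] (Φ : Z → Set X) :
    Prop :=
  IsUsco Φ ∧ ∀ Ψ : Z → Set X, IsUsco Ψ → (∀ z, Ψ z ⊆ Φ z) → Ψ = Φ

/-- `Φ` is single-valued at `z`. -/
def SingleValuedAt {Z X : Type*} (Φ : Z → Set X) (z : Z) : Prop := ∃ x, Φ z = {x}

/-- A class of topological spaces (in universe `u`). -/
def SpaceClass : Type (u + 1) := ∀ Z : Type u, TopologicalSpace Z → Prop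

/-- All members of the class are Baire spaces. -/
def IsBaireClass (P : SpaceClass.{u}) : Prop :=
  ∀ (Z : Type u) [tZ : TopologicalSpace Z], P Z tZ → BaireSpace Z

/-- The class is closed under taking open subspaces. -/
def ClosedUnderOpenSubspaces (P : SpaceClass.{u}) : Prop :=
  ∀ (Z : Type u) [tZ : TopologicalSpace Z], P Z tZ →
    ∀ U : Set Z, IsOpen U → P ↥U inferInstance

/-- The class is closed under taking dense `Gδ`-subspaces. -/
def ClosedUnderDenseGdelta (P : SpaceClass.{u}) : Prop :=
  ∀ (Z : Type u) [tZ : TopologicalSpace Z], P Z tZ →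
    ∀ S : Set Z, Dense S → IsGδ S → P ↥S inferInstance

/-- The class is closed under taking dense Baire subspaces. -/
def ClosedUnderDenseBaire (P : SpaceClass.{u}) : Prop :=
  ∀ (Z : Type u) [tZ : TopologicalSpace Z], P Z tZ →
    ∀ S : Set Z, Dense S → BaireSpace ↥S → P ↥S inferInstance

/-- `X` is `𝒞`-Piotrowski: every quasicontinuous map from a nonempty member of the class `𝒞`
to `X` has a continuity point. -/
def IsPiotrowskiFor (P : SpaceClass.{u}) (X : Type v) [TopologicalSpace X] : Prop :=
  ∀ (Z : Type u) [tZ : TopologicalSpace Z], P Z tZ → Nonempty Z →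
    ∀ f : Z → X, QuasiContinuous f → ∃ z, ContinuousAt f z

/-- `X` is strong `𝒞`-Piotrowski: for every quasicontinuous map from a member of `𝒞` to `X`
the set of continuity points is comeager. -/
def IsStrongPiotrowskiFor (P : SpaceClass.{u}) (X : Type v) [TopologicalSpace X] : Prop :=
  ∀ (Z : Type u) [tZ : TopologicalSpace Z], P Z tZ →
    ∀ f : Z → X, QuasiContinuous f → ContinuityPoints f ∈ residual Z

/-- `X` is `𝒞`-Stegall. -/
def IsStegallFor (P : SpaceClass.{u}) (X : Type v) [TopologicalSpace X] : Prop :=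
  ∀ (Z : Type u) [tZ : TopologicalSpace Z], P Z tZ → Nonempty Z →
    ∀ Φ : Z → Set X, IsMinimalUsco Φ → ∃ z, SingleValuedAt Φ z

/-- `X` is strong `𝒞`-Stegall. -/
def IsStrongStegallFor (P : SpaceClass.{u}) (X : Type v) [TopologicalSpace X] : Prop :=
  ∀ (Z : Type u) [tZ : TopologicalSpace Z], P Z tZ →
    ∀ Φ : Z → Set X, IsMinimalUsco Φ → {z | SingleValuedAt Φ z} ∈ residual Z

/-- The class of all Baire spaces (in universe `u`). -/
def BaireClass : SpaceClass.{u} := fun Z tZ => @BaireSpace Z tZ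

/-- `X` is Piotrowski. -/
def IsPiotrowski (X : Type v) [TopologicalSpace X] : Prop :=
  IsPiotrowskiFor BaireClass.{u} X

/-- `d` is a metric on `X` (not necessarily related to the topology of `X`). -/
structure IsMetric {X : Type*} (d : X → X → ℝ) : Prop where
  self : ∀ x, d x x = 0
  eq_of : ∀ x y, d x y = 0 → x = y
  symm : ∀ x y, d x y = d y x
  triangle : ∀ x y z, d x z ≤ d x y + d y z

/-- `X` is fragmented by `d`: every nonempty subset has a nonempty relatively open subset of
`d`-diameter `< ε`. -/
def FragmentedBy (X : Type*) [TopologicalSpace X] (d : X → X → ℝ) : Prop :=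
  ∀ ε : ℝ, 0 < ε → ∀ A : Set X, A.Nonempty →
    ∃ V : Set X, IsOpen V ∧ (A ∩ V).Nonempty ∧ ∀ x ∈ A ∩ V, ∀ y ∈ A ∩ V, d x y < ε

/-- The topology generated by `d` is finer than the topology of `X`. -/
def MetricTopFiner (X : Type*) [TopologicalSpace X] (d : X → X → ℝ) : Prop :=
  ∀ U : Set X, IsOpen U → ∀ x ∈ U, ∃ ε : ℝ, 0 < ε ∧ {y | d x y < ε} ⊆ U

/-- `X` is fragmentable. -/
def Fragmentable (X : Type*) [TopologicalSpace X] : Prop :=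
  ∃ d : X → X → ℝ, IsMetric d ∧ FragmentedBy X d

/-- `X` is strictly fragmented by the metric `d`. -/
def StrictlyFragmentedBy (X : Type*) [TopologicalSpace X] (d : X → X → ℝ) : Prop :=
  IsMetric d ∧ FragmentedBy X d ∧ MetricTopFiner X d

/-- `X` is strictly fragmentable. -/
def StrictlyFragmentable (X : Type*) [TopologicalSpace X] : Prop :=
  ∃ d : X → X → ℝ, StrictlyFragmentedBy X d

/-- The countable family `𝒰` separates the points of `S` from the points of `Sᶜ`:
some member of the family contains exactly one point of any pair `x ∈ S`, `y ∉ S`. -/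
def SeparatesFrom {K : Type*} (𝒰 : ℕ → Set K) (S : Set K) : Prop :=
  ∀ x ∈ S, ∀ y ∈ Sᶜ, ∃ n, (x ∈ 𝒰 n ∧ y ∉ 𝒰 n) ∨ (x ∉ 𝒰 n ∧ y ∈ 𝒰 n)

/-- `X` has countable separation: some compactification `K` of `X` carries a countable family
of open sets separating the points of (the copy of) `X` from the points of `K \ X`. -/
def HasCountableSeparation (X : Type u) [TopologicalSpace X] : Prop :=
  ∃ (K : Type u) (tK : TopologicalSpace K), @CompactSpace K tK ∧ @T2Space K tK ∧
    ∃ e : X → K, @Topology.IsEmbedding X K _ tK e ∧ @DenseRange K tK X e ∧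
      ∃ 𝒰 : ℕ → Set K, (∀ n, @IsOpen K tK (𝒰 n)) ∧ SeparatesFrom 𝒰 (Set.range e)


section Aux

variable {Z : Type*} [TopologicalSpace Z]

lemma open_inter_of_subset_closure {O s : Set Z} (hO : IsOpen O) (hne : O.Nonempty)
    (h : O ⊆ closure s) : (O ∩ s).Nonempty := by
  obtain ⟨x, hx⟩ := hne
  exact mem_closure_iff.mp (h hx) O hO hx

lemma isNowhereDense_mono {s t : Set Z} (h : IsNowhereDense s) (hts : t ⊆ s) :
    IsNowhereDense t := by
  have h2 : interior (closure t) ⊆ interior (closure s) := interior_mono (closure_mono hts)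
  rw [IsNowhereDense] at h ⊢
  rw [h] at h2
  exact Set.eq_empty_of_subset_empty h2

lemma IsNowhereDense.isMeagre' {s : Set Z} (h : IsNowhereDense s) : IsMeagre s :=
  isMeagre_iff_countable_union_isNowhereDense.mpr
    ⟨{s}, by simpa using h, Set.countable_singleton s, by simp⟩

lemma IsMeagre.union' {s t : Set Z} (hs : IsMeagre s) (ht : IsMeagre t) : IsMeagre (s ∪ t) := by
  rw [IsMeagre, Set.compl_union]; exact Filter.inter_mem hs ht

lemma isNowhereDense_biUnion_disjoint {𝒱 : Set (Set Z)} (hd : 𝒱.PairwiseDisjoint id)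
    (hop : ∀ V ∈ 𝒱, IsOpen V) (N : Set Z → Set Z) (hsub : ∀ V ∈ 𝒱, N V ⊆ V)
    (hnwd : ∀ V ∈ 𝒱, IsNowhereDense (N V)) :
    IsNowhereDense (⋃ V ∈ 𝒱, N V) := by
  set M := ⋃ V ∈ 𝒱, N V with hM
  rw [IsNowhereDense, Set.eq_empty_iff_forall_notMem]
  intro x hx
  have hOopen : IsOpen (interior (closure M)) := isOpen_interior
  obtain ⟨y, hyO, hyM⟩ := open_inter_of_subset_closure hOopen ⟨x, hx⟩ interior_subset
  obtain ⟨V, hV𝒱, hyN⟩ := Set.mem_iUnion₂.mp hyM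
  have hO' : IsOpen (interior (closure M) ∩ V) := hOopen.inter (hop V hV𝒱)
  -- interior (closure M) ∩ V ⊆ closure (N V)
  have key : interior (closure M) ∩ V ⊆ closure (N V) := by
    intro u hu
    rw [mem_closure_iff]
    intro P hP hPu
    have hP' : IsOpen (P ∩ (interior (closure M) ∩ V)) := hP.inter hO'
    have hP'sub : P ∩ (interior (closure M) ∩ V) ⊆ closure M :=
      fun w hw => interior_subset hw.2.1
    obtain ⟨z, hz, hzM⟩ := open_inter_of_subset_closure hP' ⟨u, hPu, hu⟩ hP'sub
    obtain ⟨V', hV'𝒱, hzN⟩ := Set.mem_iUnion₂.mp hzM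
    have hVV' : V = V' := by
      by_contra hne
      exact (hd hV𝒱 hV'𝒱 hne).ne_of_mem hz.2.2 (hsub V' hV'𝒱 hzN) rfl
    exact ⟨z, hz.1, hVV' ▸ hzN⟩
  have : interior (closure M) ∩ V ⊆ interior (closure (N V)) :=
    hO'.subset_interior_iff.mpr key
  have hVnwd := hnwd V hV𝒱
  rw [IsNowhereDense] at hVnwd
  rw [hVnwd] at this
  exact this ⟨hyO, hsub V hV𝒱 hyN⟩ 

/-- A form of the Banach category theorem: if every nonempty open set contains a nonempty open
subset on which `A` is meager, then `A` is meager. -/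
lemma banach_category (A : Set Z)
    (h : ∀ V : Set Z, IsOpen V → V.Nonempty →
      ∃ U, IsOpen U ∧ U.Nonempty ∧ U ⊆ V ∧ IsMeagre (A ∩ U)) :
    IsMeagre A := by
  set 𝒮 : Set (Set (Set Z)) :=
    {𝒱 | (∀ V ∈ 𝒱, IsOpen V ∧ V.Nonempty ∧ IsMeagre (A ∩ V)) ∧ 𝒱.PairwiseDisjoint id} with h𝒮
  obtain ⟨𝒱, h𝒱max⟩ := zorn_subset 𝒮 (by
    intro c hc hchain
    refine ⟨⋃₀ c, ⟨fun V hV => ?_, ?_⟩, fun s hs => Set.subset_sUnion_of_mem hs⟩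
    · obtain ⟨𝒲, h𝒲c, hV𝒲⟩ := hV
      exact (hc h𝒲c).1 V hV𝒲
    · intro V hV W hW hne
      obtain ⟨𝒱₁, h𝒱₁, hV₁⟩ := hV
      obtain ⟨𝒱₂, h𝒱₂, hW₂⟩ := hW
      rcases hchain.total h𝒱₁ h𝒱₂ with hle | hle
      · exact (hc h𝒱₂).2 (hle hV₁) hW₂ hne
      · exact (hc h𝒱₁).2 hV₁ (hle hW₂) hne)
  have h𝒱 := h𝒱max.prop
  set T := ⋃₀ 𝒱 with hT
  have hTopen : IsOpen T := isOpen_sUnion fun V hV => (h𝒱.1 V hV).1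
  have hTdense : Dense T := by
    rw [dense_iff_inter_open]
    intro O hO hOne
    by_contra hcon
    rw [Set.not_nonempty_iff_eq_empty] at hcon
    obtain ⟨U, hUopen, hUne, hUO, hUmea⟩ := h O hO hOne
    have hUT : U ∩ T = ∅ := Set.eq_empty_of_subset_empty
      (hcon ▸ Set.inter_subset_inter_left T hUO)
    have hU𝒱 : U ∉ 𝒱 := by
      intro hmem
      obtain ⟨u, hu⟩ := hUne
      have : u ∈ U ∩ T := ⟨hu, Set.subset_sUnion_of_mem hmem hu⟩
      rw [hUT] at this
      exact this
    have : insert U 𝒱 ∈ 𝒮 := by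
      constructor
      · rintro V (rfl | hV)
        · exact ⟨hUopen, hUne, hUmea⟩
        · exact h𝒱.1 V hV
      · refine Set.pairwiseDisjoint_insert_of_notMem hU𝒱 |>.mpr ⟨h𝒱.2, fun V hV => ?_⟩
        rw [Set.disjoint_iff_inter_eq_empty]
        exact Set.eq_empty_of_subset_empty
          (hUT ▸ Set.inter_subset_inter_right U (Set.subset_sUnion_of_mem hV))
    have := h𝒱max.eq_of_subset this (Set.subset_insert U 𝒱)
    exact hU𝒱 (this ▸ Set.mem_insert U 𝒱)
  -- choose coverings by nowhere dense sets
  have hchoice : ∀ V ∈ 𝒱, ∃ e : ℕ → Set Z,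
      (∀ n, IsNowhereDense (e n)) ∧ A ∩ V ⊆ ⋃ n, e n := by
    intro V hV
    obtain ⟨S, hSnwd, hScount, hScover⟩ :=
      isMeagre_iff_countable_union_isNowhereDense.mp (h𝒱.1 V hV).2.2
    obtain ⟨e, he⟩ := (hScount.insert ∅).exists_eq_range (Set.insert_nonempty ∅ S)
    refine ⟨e, fun n => ?_, ?_⟩
    · have : e n ∈ insert ∅ S := he ▸ Set.mem_range_self n
      rcases this with h1 | h1
      · simp [h1]
      · exact hSnwd _ h1
    · refine hScover.trans ?_
      intro z hz
      obtain ⟨t, htS, hzt⟩ := hz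
      have : t ∈ insert ∅ S := Set.mem_insert_of_mem ∅ htS
      rw [he] at this
      obtain ⟨n, rfl⟩ := this
      exact Set.mem_iUnion.mpr ⟨n, hzt⟩
  choose! e he using hchoice
  have hmeagre_T : IsMeagre (A ∩ T) := by
    have hMn : ∀ n, IsNowhereDense (⋃ V ∈ 𝒱, (e V n ∩ V)) := by
      intro n
      refine isNowhereDense_biUnion_disjoint h𝒱.2 (fun V hV => (h𝒱.1 V hV).1)
        (fun V => e V n ∩ V) (fun V hV => Set.inter_subset_right) (fun V hV =>
          isNowhereDense_mono ((he V hV).1 n) Set.inter_subset_left)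
    have hcover : A ∩ T ⊆ ⋃ n, ⋃ V ∈ 𝒱, (e V n ∩ V) := by
      rintro z ⟨hzA, V, hV𝒱, hzV⟩
      obtain ⟨n, hn⟩ := Set.mem_iUnion.mp ((he V hV𝒱).2 ⟨hzA, hzV⟩)
      exact Set.mem_iUnion.mpr ⟨n, Set.mem_iUnion₂.mpr ⟨V, hV𝒱, hn, hzV⟩⟩
    exact (isMeagre_iUnion fun n => (hMn n).isMeagre').mono hcover
  have hTc : IsMeagre Tᶜ := by
    refine IsNowhereDense.isMeagre' ?_
    rw [hTopen.isClosed_compl.isNowhereDense_iff, Set.eq_empty_iff_forall_notMem]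
    intro x hzx
    rw [interior_compl] at hzx
    exact hzx (hTdense.closure_eq ▸ Set.mem_univ x)
  exact (hmeagre_T.union' hTc).mono (fun z hz => by
    by_cases hT' : z ∈ T
    · exact Or.inl ⟨hz, hT'⟩
    · exact Or.inr hT')

end Aux

section Transfer

variable {Z : Type*} {X : Type*} {C : Type*}
variable [TopologicalSpace Z] [TopologicalSpace X] [TopologicalSpace C]

lemma quasiContinuous_comp_embedding {f : Z → X} (hf : QuasiContinuous f) {ι : C → Z}
    (hι : Topology.IsEmbedding ι) {V : Set Z} (hV : IsOpen V)
    (hrange : Set.range ι ⊆ V) (hdense : V ⊆ closure (Set.range ι)) :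
    QuasiContinuous (f ∘ ι) := by
  intro c Ox hOx Oy hOy
  rw [hι.isInducing.nhds_eq_comap, Filter.mem_comap] at hOx
  obtain ⟨O, hO, hOsub⟩ := hOx
  obtain ⟨O', hO'sub, hO'open, hcO'⟩ := mem_nhds_iff.mp hO
  have h1 : O' ∩ V ∈ nhds (ι c) :=
    (hO'open.inter hV).mem_nhds ⟨hcO', hrange ⟨c, rfl⟩⟩
  obtain ⟨U, hUopen, hUne, hUsub, hUim⟩ := hf (ι c) (O' ∩ V) h1 Oy hOy
  have hUV : U ⊆ closure (Set.range ι) := fun u hu => hdense (hUsub hu).2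
  obtain ⟨u, huU, c', hc'⟩ := open_inter_of_subset_closure hUopen hUne hUV
  refine ⟨ι ⁻¹' U, hUopen.preimage hι.continuous, ⟨c', by rw [Set.mem_preimage, hc']; exact huU⟩,
    fun d hd => hOsub (Set.mem_preimage.mpr (hO'sub (hUsub hd).1)), ?_⟩
  rintro y ⟨d, hd, rfl⟩
  exact hUim ⟨ι d, hd, rfl⟩

lemma continuousAt_of_embedding [RegularSpace X] {f : Z → X} (hf : QuasiContinuous f)
    {ι : C → Z} (hι : Topology.IsEmbedding ι) {V : Set Z} (hV : IsOpen V)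
    (hrange : Set.range ι ⊆ V) (hdense : V ⊆ closure (Set.range ι))
    {c : C} (hc : ContinuousAt (f ∘ ι) c) :
    ContinuousAt f (ι c) := by
  rw [ContinuousAt, Filter.tendsto_def]
  intro G hG
  obtain ⟨H, hHnhds, hHclosed, hHsub⟩ := exists_mem_nhds_isClosed_subset hG
  have hc' : (f ∘ ι) ⁻¹' H ∈ nhds c := hc hHnhds
  rw [hι.isInducing.nhds_eq_comap, Filter.mem_comap] at hc'
  obtain ⟨O, hO, hOsub⟩ := hc'
  obtain ⟨O', hO'sub, hO'open, hcO'⟩ := mem_nhds_iff.mp hO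
  have hO'' : IsOpen (O' ∩ V) := hO'open.inter hV
  have hcO'' : ι c ∈ O' ∩ V := ⟨hcO', hrange ⟨c, rfl⟩⟩
  have key : O' ∩ V ⊆ f ⁻¹' H := by
    intro z hz
    by_contra hzH
    have hHc : Hᶜ ∈ nhds (f z) := hHclosed.isOpen_compl.mem_nhds hzH
    obtain ⟨U, hUopen, hUne, hUsub, hUim⟩ := hf z (O' ∩ V) (hO''.mem_nhds hz) Hᶜ hHc
    have hUcl : U ⊆ closure (Set.range ι) := fun u hu => hdense (hUsub hu).2
    obtain ⟨u, huU, c', hc'eq⟩ := open_inter_of_subset_closure hUopen hUne hUcl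
    have h1 : f u ∈ Hᶜ := hUim ⟨u, huU, rfl⟩
    have h2 : f u ∈ H := by
      have hcO : c' ∈ ι ⁻¹' O := Set.mem_preimage.mpr (hc'eq ▸ hO'sub (hUsub huU).1)
      have := hOsub hcO
      rwa [Set.mem_preimage, Function.comp_apply, hc'eq] at this
    exact h1 h2
  exact Filter.mem_of_superset (hO''.mem_nhds hcO'')
    (key.trans (Set.preimage_mono hHsub))

lemma baireSpace_of_embedding {ι : C → Z} (hι : Topology.IsEmbedding ι) {V : Set Z}
    (hV : IsOpen V) (hrange : Set.range ι ⊆ V)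
    (H : ∀ U : Set Z, IsOpen U → U.Nonempty → U ⊆ V → ¬ IsMeagre (Set.range ι ∩ U)) :
    BaireSpace C := by
  constructor
  intro F hFopen hFdense
  rw [dense_iff_inter_open]
  intro W hW hWne
  obtain ⟨U₀, hU₀open, hU₀eq⟩ := hι.isInducing.isOpen_iff.mp hW
  choose Un hUnopen hUneq using fun n => hι.isInducing.isOpen_iff.mp (hFopen n)
  by_contra hcon
  rw [Set.not_nonempty_iff_eq_empty] at hcon
  have hR : ∀ n, IsNowhereDense (Set.range ι \ Un n) := by
    intro n
    rw [IsNowhereDense, Set.eq_empty_iff_forall_notMem]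
    intro x hx
    set O := interior (closure (Set.range ι \ Un n)) with hOdef
    have hOopen : IsOpen O := isOpen_interior
    have hOsubR : O ⊆ closure (Set.range ι \ Un n) := interior_subset
    have hOsub : O ⊆ closure (Set.range ι) := hOsubR.trans (closure_mono Set.diff_subset)
    obtain ⟨y, hyO, c₁, hc₁⟩ := open_inter_of_subset_closure hOopen ⟨x, hx⟩ hOsub
    have hc₁O : c₁ ∈ ι ⁻¹' O := by rw [Set.mem_preimage, hc₁]; exact hyO
    obtain ⟨c₂, hc₂O, hc₂F⟩ := dense_iff_inter_open.mp (hFdense n) (ι ⁻¹' O)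
      (hOopen.preimage hι.continuous) ⟨c₁, hc₁O⟩
    have hc₂U : ι c₂ ∈ Un n := by
      have : c₂ ∈ ι ⁻¹' Un n := by rw [hUneq n]; exact hc₂F
      exact this
    have h3 : IsOpen (O ∩ Un n) := hOopen.inter (hUnopen n)
    obtain ⟨z, hz, hzR⟩ := open_inter_of_subset_closure h3 ⟨ι c₂, hc₂O, hc₂U⟩
      (fun w hw => hOsubR hw.1)
    exact hzR.2 hz.2
  obtain ⟨c₀, hc₀⟩ := hWne
  have hc₀U₀ : ι c₀ ∈ U₀ := by
    have : c₀ ∈ ι ⁻¹' U₀ := by rw [hU₀eq]; exact hc₀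
    exact this
  refine H (U₀ ∩ V) (hU₀open.inter hV) ⟨ι c₀, hc₀U₀, hrange ⟨c₀, rfl⟩⟩
    Set.inter_subset_right ?_
  have hsub : Set.range ι ∩ (U₀ ∩ V) ⊆ ⋃ n, (Set.range ι \ Un n) := by
    rintro z ⟨⟨c, rfl⟩, hzU₀, hzV⟩
    have hcW : c ∈ W := by rw [← hU₀eq]; exact hzU₀
    have hnotall : ¬ (c ∈ ⋂ n, F n) := fun hmem =>
      Set.eq_empty_iff_forall_notMem.mp hcon c ⟨hcW, hmem⟩
    rw [Set.mem_iInter] at hnotall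
    push_neg at hnotall
    obtain ⟨n, hn⟩ := hnotall
    refine Set.mem_iUnion.mpr ⟨n, ⟨c, rfl⟩, fun hU => hn ?_⟩
    rw [← hUneq n]; exact hU
  exact (isMeagre_iUnion fun n => (hR n).isMeagre').mono hsub

end Transfer

/-- If a class `𝒞` (= `P`) of Baire spaces is closed under open subspaces
and dense Baire subspaces, then a regular space `X` is `𝒞`-Piotrowski if and only if it is
strong `𝒞`-Piotrowski. -/
theorem piotrowski_iff_strongPiotrowski (P : SpaceClass.{u}) (hB : IsBaireClass P)
    (hO : ClosedUnderOpenSubspaces P) (hD : ClosedUnderDenseBaire P)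
    (X : Type v) [TopologicalSpace X] [RegularSpace X] :
    IsPiotrowskiFor P X ↔ IsStrongPiotrowskiFor P X := by
  constructor
  · intro hP Z tZ hZ f hqc
    have hmea : IsMeagre (ContinuityPoints f)ᶜ := by
      apply banach_category
      intro V hVopen hVne
      by_contra hcon
      push_neg at hcon
      set A := (ContinuityPoints f)ᶜ with hA
      set S' : Set ↥V := (Subtype.val ⁻¹' A : Set ↥V) with hS'
      set ι : ↥S' → Z := fun p => ((p.1 : ↥V) : Z) with hιdef
      have hemb : Topology.IsEmbedding ι :=
        Topology.IsEmbedding.subtypeVal.comp Topology.IsEmbedding.subtypeVal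
      have hrangeeq : Set.range ι = A ∩ V := by
        ext z
        constructor
        · rintro ⟨⟨⟨z, hzV⟩, hzA⟩, rfl⟩
          exact ⟨hzA, hzV⟩
        · rintro ⟨hzA, hzV⟩
          exact ⟨⟨⟨z, hzV⟩, hzA⟩, rfl⟩
      have hrange : Set.range ι ⊆ V := by rw [hrangeeq]; exact Set.inter_subset_right
      have hHH : ∀ U : Set Z, IsOpen U → U.Nonempty → U ⊆ V →
          ¬ IsMeagre (Set.range ι ∩ U) := by
        intro U hU hUne hUV
        rw [hrangeeq]
        have heq : A ∩ V ∩ U = A ∩ U := by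
          rw [Set.inter_assoc, Set.inter_eq_self_of_subset_right hUV]
        rw [heq]
        exact hcon U hU hUne hUV
      have hdense : V ⊆ closure (Set.range ι) := by
        intro v hv
        rw [mem_closure_iff]
        intro o ho hvo
        have h3 := hHH (o ∩ V) (ho.inter hVopen) ⟨v, hvo, hv⟩ Set.inter_subset_right
        by_contra hcon2
        rw [Set.not_nonempty_iff_eq_empty] at hcon2
        apply h3
        have hzero : Set.range ι ∩ (o ∩ V) = ∅ :=
          Set.eq_empty_iff_forall_notMem.mpr fun z hz =>
            Set.eq_empty_iff_forall_notMem.mp hcon2 z ⟨hz.2.1, hz.1⟩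
        rw [hzero]
        exact IsMeagre.empty
      have hbaire : BaireSpace ↥S' := baireSpace_of_embedding hemb hVopen hrange hHH
      have hne' : Nonempty ↥S' := by
        by_contra hempty
        apply hHH V hVopen hVne subset_rfl
        have hzero : Set.range ι ∩ V = ∅ :=
          Set.eq_empty_iff_forall_notMem.mpr (by
            rintro z ⟨⟨p, rfl⟩, _⟩
            exact hempty ⟨p⟩)
        rw [hzero]
        exact IsMeagre.empty
      have hPV : P ↥V inferInstance := hO Z hZ V hVopen
      have hdenseS' : Dense S' := by
        rw [dense_iff_inter_open]
        intro W hW hWne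
        obtain ⟨Oo, hOopen, hOeq⟩ := Topology.IsInducing.subtypeVal.isOpen_iff.mp hW
        obtain ⟨⟨w, hwV⟩, hwW⟩ := hWne
        have hwO : w ∈ Oo := by rw [← hOeq] at hwW; exact hwW
        have h3 := hHH (Oo ∩ V) (hOopen.inter hVopen) ⟨w, hwO, hwV⟩ Set.inter_subset_right
        have h4 : (Set.range ι ∩ (Oo ∩ V)).Nonempty := by
          by_contra hc2
          rw [Set.not_nonempty_iff_eq_empty] at hc2
          rw [hc2] at h3
          exact h3 IsMeagre.empty
        obtain ⟨z, ⟨p, rfl⟩, hzO, hzV⟩ := h4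
        refine ⟨p.1, ?_, p.2⟩
        have : (p.1 : Z) ∈ Oo := hzO
        rw [← hOeq]
        exact this
      have hPS : P ↥S' inferInstance := hD ↥V hPV S' hdenseS' hbaire
      have hqc' : QuasiContinuous (f ∘ ι) :=
        quasiContinuous_comp_embedding hqc hemb hVopen hrange hdense
      obtain ⟨c, hc⟩ := hP ↥S' hPS hne' (f ∘ ι) hqc'
      have hcont : ContinuousAt f (ι c) :=
        continuousAt_of_embedding hqc hemb hVopen hrange hdense hc
      have hmemA : ι c ∈ A := by
        have : ι c ∈ Set.range ι := ⟨c, rfl⟩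
        rw [hrangeeq] at this
        exact this.1
      exact hmemA hcont
    rw [IsMeagre, compl_compl] at hmea
    exact hmea
  · intro hS Z tZ hZ hne f hqc
    haveI := hB Z hZ
    haveI := hne
    obtain ⟨z, hz⟩ := (dense_of_mem_residual (hS Z hZ f hqc)).nonempty
    exact ⟨z, hz⟩
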